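/- Let G be a tree on at least 5 vertices. A vertex v is a leaf of G if and only if there exists a vertex w ≠ v that dominates v (every connected triple containing v also contains w), and v does not dominate any vertex u ≠ v. -/

import Mathlib

open SimpleGraph

/-- `w` dominates `u`: every connected triple containing `u` also contains `w`. -/
def Dominates {V : Type*} (G : SimpleGraph V) (w u : V) : Prop :=
  ∀ S : Finset V, S.card = 3 → (G.induce (S : Set V)).Connected → u ∈ S → w ∈ S

section Helpers

variable {V : Type*} {G : SimpleGraph V}

lemma path_triple_connected {x y z : V} (hxy : G.Adj x y) (hyz : G.Adj y z) (hxz : x ≠ z) :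
    (G.induce ({x, y, z} : Set V)).Connected := by
  set s : Set V := {x, y, z} with hs
  have hx : x ∈ s := by simp [hs]
  have hy : y ∈ s := by simp [hs]
  have hz : z ∈ s := by simp [hs]
  have h1 : (G.induce s).Adj ⟨x, hx⟩ ⟨y, hy⟩ := hxy
  have h2 : (G.induce s).Adj ⟨y, hy⟩ ⟨z, hz⟩ := hyz
  rw [connected_iff]
  refine ⟨?_, ⟨⟨y, hy⟩⟩⟩
  have key : ∀ c : s, (G.induce s).Reachable c ⟨y, hy⟩ := by
    rintro ⟨c, hc⟩
    have hc' : c = x ∨ c = y ∨ c = z := by simpa [hs] using hc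
    rcases hc' with rfl | rfl | rfl
    · exact h1.reachable
    · exact Reachable.refl _
    · exact h2.symm.reachable
  exact fun a b => (key a).trans (key b).symm

lemma exists_adj_outside [Fintype V] (hc : G.Connected) (T : Finset V) {u : V}
    (hu : u ∈ T) (hlt : T.card < Fintype.card V) :
    ∃ a ∈ T, ∃ b, b ∉ T ∧ G.Adj a b := by
  obtain ⟨p, hp⟩ : ∃ p, p ∉ T := by
    by_contra h
    push_neg at h
    have := Finset.eq_univ_iff_forall.mpr h
    rw [this, Finset.card_univ] at hlt
    omega
  obtain ⟨w⟩ := hc.preconnected u p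
  obtain ⟨d, _, hd1, hd2⟩ := w.exists_boundary_dart (↑T : Set V) (by exact_mod_cast hu)
    (by exact_mod_cast hp)
  exact ⟨d.fst, by exact_mod_cast hd1, d.snd, by exact_mod_cast hd2, d.adj⟩

lemma exists_adj_mem {S : Finset V} (hcard : 1 < S.card)
    (hconn : (G.induce (S : Set V)).Connected) {v : V} (hv : v ∈ S) :
    ∃ x ∈ S, G.Adj v x := by
  obtain ⟨u, hu, hne⟩ := Finset.exists_mem_ne hcard v
  obtain ⟨p⟩ := hconn.preconnected ⟨v, hv⟩ ⟨u, hu⟩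
  cases p with
  | nil => exact absurd rfl hne
  | cons h q =>
    rename_i b
    exact ⟨b.1, b.2, h⟩

lemma tree_no_triangle (hT : G.IsTree) {a b c : V} (hab : G.Adj a b) (hbc : G.Adj b c)
    (hac : G.Adj a c) : False := by
  obtain ⟨p, _, hu⟩ := hT.existsUnique_path a c
  have h1 : (Walk.cons hac Walk.nil).IsPath := by
    simp [Walk.isPath_def, hac.ne]
  have h2 : (Walk.cons hab (Walk.cons hbc Walk.nil)).IsPath := by
    simp [Walk.isPath_def, hab.ne, hbc.ne, hac.ne]
  have e := (hu _ h1).trans (hu _ h2).symm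
  have := congrArg Walk.length e
  simp at this

lemma tree_unique_mid (hT : G.IsTree) {a b x y : V}
    (hax : G.Adj a x) (hxb : G.Adj x b) (hay : G.Adj a y) (hyb : G.Adj y b)
    (hab : a ≠ b) : x = y := by
  obtain ⟨p, _, hu⟩ := hT.existsUnique_path a b
  have h1 : (Walk.cons hax (Walk.cons hxb Walk.nil)).IsPath := by
    simp [Walk.isPath_def, hax.ne, hxb.ne, hab]
  have h2 : (Walk.cons hay (Walk.cons hyb Walk.nil)).IsPath := by
    simp [Walk.isPath_def, hay.ne, hyb.ne, hab]
  have e := (hu _ h1).trans (hu _ h2).symm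
  have := congrArg Walk.support e
  simpa using this

lemma triple_facts [DecidableEq V] {u x b : V} (hux : G.Adj u x) (hub : G.Adj u b)
    (hxb : x ≠ b) :
    ∃ S : Finset V, S.card = 3 ∧ (G.induce (S : Set V)).Connected ∧ u ∈ S ∧ x ∈ S ∧ b ∈ S ∧
      ∀ c ∈ S, c = u ∨ c = x ∨ c = b := by
  refine ⟨{x, u, b}, ?_, ?_, by simp, by simp, by simp, ?_⟩
  · exact Finset.card_eq_three.mpr ⟨x, u, b, hux.ne', hxb, hub.ne, rfl⟩
  · have hco : ((({x, u, b} : Finset V) : Set V)) = ({x, u, b} : Set V) := by simp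
    rw [hco]
    exact path_triple_connected hux.symm hub hxb
  · intro c hc
    simp only [Finset.mem_insert, Finset.mem_singleton] at hc
    tauto

end Helpers

theorem stmt4 {V : Type*} [Fintype V] (G : SimpleGraph V) [DecidableRel G.Adj]
    (hT : G.IsTree) (hcard : 5 ≤ Fintype.card V) (v : V) :
    G.degree v = 1 ↔
      (∃ w, w ≠ v ∧ Dominates G w v) ∧ (∀ u, u ≠ v → ¬ Dominates G v u) := by
  classical
  have hconn := hT.isConnected
  constructor
  · intro hdeg
    obtain ⟨w, hw⟩ := Finset.card_eq_one.mp (by rw [← hdeg]; rfl :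
      (G.neighborFinset v).card = 1)
    have hadj : G.Adj v w := by
      rw [← mem_neighborFinset, hw]; simp
    have huniq : ∀ x, G.Adj v x → x = w := by
      intro x hx
      have : x ∈ G.neighborFinset v := (mem_neighborFinset _ _ _).mpr hx
      rw [hw] at this; simpa using this
    refine ⟨⟨w, hadj.ne', ?_⟩, ?_⟩
    · intro S hS hSc hvS
      obtain ⟨x, hxS, hvx⟩ := exists_adj_mem (by omega) hSc hvS
      rwa [huniq x hvx] at hxS
    · intro u hu hdom
      -- find x a neighbor of u with x ≠ v
      obtain ⟨a0, ha0, x0, hx0T, hax0⟩ := exists_adj_outside hconn {u} (Finset.mem_singleton_self u)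
        (by rw [Finset.card_singleton]; omega)
      have ha0u : a0 = u := by simpa using ha0
      rw [ha0u] at hax0
      obtain ⟨x, hux, hxv⟩ : ∃ x, G.Adj u x ∧ x ≠ v := by
        by_cases hx0v : x0 = v
        · rw [hx0v] at hax0
          have huw : u = w := huniq u hax0.symm
          obtain ⟨a1, ha1, x1, hx1T, hax1⟩ := exists_adj_outside hconn {u, v}
            (Finset.mem_insert_self u _) (by
              have : ({u, v} : Finset V).card ≤ 2 :=
                (Finset.card_insert_le _ _).trans (by simp)
              omega)
          simp only [Finset.mem_insert, Finset.mem_singleton] at ha1 hx1T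
          push_neg at hx1T
          rcases ha1 with rfl | rfl
          · exact ⟨x1, hax1, hx1T.2⟩
          · exact absurd (huniq x1 hax1) (fun h => hx1T.1 (h.trans huw.symm))
        · exact ⟨x0, hax0, hx0v⟩
      have hxu : x ≠ u := hux.ne'
      -- get the third vertex
      obtain ⟨a, ha, b, hbT, hab⟩ : ∃ a, (a = u ∨ a = x) ∧ ∃ b, (b ∉ ({u, x} : Finset V) ∧ b ≠ v) ∧ G.Adj a b := by
        by_cases hwm : w = u ∨ w = x
        · obtain ⟨a, ha, b, hbT, hab⟩ := exists_adj_outside hconn {u, x, v}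
            (Finset.mem_insert_self u _) (by
              have : ({u, x, v} : Finset V).card ≤ 3 :=
                (Finset.card_insert_le _ _).trans
                  (by simpa using Nat.add_le_add_right (Finset.card_le_two : ({x, v} : Finset V).card ≤ 2) 1)
              omega)
          simp only [Finset.mem_insert, Finset.mem_singleton] at ha hbT
          push_neg at hbT
          rcases ha with rfl | rfl | rfl
          · exact ⟨a, Or.inl rfl, b, ⟨by simp [hbT.1, hbT.2.1], hbT.2.2⟩, hab⟩
          · exact ⟨a, Or.inr rfl, b, ⟨by simp [hbT.1, hbT.2.1], hbT.2.2⟩, hab⟩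
          · -- a = v, so b = w ∈ {u, x}, contradiction
            exact absurd (huniq b hab) (by rcases hwm with rfl | rfl
                                           · exact fun h => hbT.1 h
                                           · exact fun h => hbT.2.1 h)
        · obtain ⟨a, ha, b, hbT, hab⟩ := exists_adj_outside hconn {u, x}
            (Finset.mem_insert_self u _) (by
              have : ({u, x} : Finset V).card ≤ 2 :=
                (Finset.card_insert_le _ _).trans (by simp)
              omega)
          simp only [Finset.mem_insert, Finset.mem_singleton] at ha hbT
          push_neg at hbT
          have hbv : b ≠ v := by
            rintro rfl
            have : a = w := huniq a hab.symm
            rcases ha with rfl | rfl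
            · exact hwm (Or.inl this.symm)
            · exact hwm (Or.inr this.symm)
          exact ⟨a, ha, b, ⟨by simp [hbT.1, hbT.2], hbv⟩, hab⟩
      simp only [Finset.mem_insert, Finset.mem_singleton] at hbT
      push_neg at hbT
      obtain ⟨⟨hbu, hbx⟩, hbv⟩ := hbT
      rcases ha with rfl | rfl
      · -- path x - a - b  (a = u)
        obtain ⟨S, hS1, hS2, hS3, _, _, hS6⟩ := triple_facts hux hab (fun h => hbx h.symm)
        have hvS := hdom S hS1 hS2 hS3
        rcases hS6 v hvS with h | h | h
        · exact hu h.symm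
        · exact hxv h.symm
        · exact hbv h.symm
      · -- path u - a - b  (a = x)
        obtain ⟨S, hS1, hS2, _, hS4, _, hS6⟩ := triple_facts hux.symm hab (fun h => hbu h.symm)
        have hvS := hdom S hS1 hS2 hS4
        rcases hS6 v hvS with h | h | h
        · exact hxv h.symm
        · exact hu h.symm
        · exact hbv h.symm
  · rintro ⟨⟨w, hwv, hdomw⟩, hnd⟩
    by_contra hdeg
    obtain ⟨a0, ha0, b0, hb0, hadj0⟩ := exists_adj_outside hconn {v} (Finset.mem_singleton_self v) (by rw [Finset.card_singleton]; omega)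
    have ha0v : a0 = v := by simpa using ha0
    rw [ha0v] at hadj0
    have hge : 1 < (G.neighborFinset v).card := by
      have hpos : 0 < (G.neighborFinset v).card :=
        Finset.card_pos.mpr ⟨b0, (mem_neighborFinset _ _ _).mpr hadj0⟩
      have : (G.neighborFinset v).card ≠ 1 := hdeg
      omega
    obtain ⟨a, haN, b, hbN, hab⟩ := Finset.one_lt_card.mp hge
    have hva : G.Adj v a := (mem_neighborFinset _ _ _).mp haN
    have hvb : G.Adj v b := (mem_neighborFinset _ _ _).mp hbN
    by_cases hleaf : ∃ u, G.Adj v u ∧ ∀ x, G.Adj u x → x = v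
    · obtain ⟨u, hvu, hu⟩ := hleaf
      refine hnd u hvu.ne' ?_
      intro S hS hSc huS
      obtain ⟨x, hxS, hux⟩ := exists_adj_mem (by omega) hSc huS
      rwa [hu x hux] at hxS
    · push_neg at hleaf
      obtain ⟨a', haa', ha'v⟩ := hleaf a hva
      obtain ⟨b', hbb', hb'v⟩ := hleaf b hvb
      -- S1 = {a, v, b}, path a-v-b with middle v
      obtain ⟨S1, h11, h12, h13, _, _, h16⟩ := triple_facts hva hvb hab
      have hwS1 := hdomw S1 h11 h12 h13
      rcases h16 w hwS1 with hq | hq | hq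
      · exact hwv hq
      · -- w = a; S3 = {b', b, v}, path b'-b-v with middle b
        obtain ⟨S3, h31, h32, _, _, h35, h36⟩ := triple_facts hbb' hvb.symm hb'v
        have hwS3 := hdomw S3 h31 h32 h35
        rcases h36 w hwS3 with hr | hr | hr
        · exact hab (hq.symm.trans hr)
        · -- a = b', triangle v a b
          have hba : G.Adj b a := hq ▸ hr ▸ hbb'
          exact tree_no_triangle hT hva hba.symm hvb
        · exact hwv hr
      · -- w = b; S2 = {a', a, v}, path a'-a-v with middle a
        obtain ⟨S2, h21, h22, _, _, h25, h26⟩ := triple_facts haa' hva.symm ha'v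
        have hwS2 := hdomw S2 h21 h22 h25
        rcases h26 w hwS2 with hr | hr | hr
        · exact hab (hr.symm.trans hq)
        · -- b = a', triangle v a b
          have hab' : G.Adj a b := hq ▸ hr ▸ haa'
          exact tree_no_triangle hT hva hab' hvb
        · exact hwv hr
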